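/- A Hermitian vector bundle (E,h^E) of rank r over an n-dimensional complex manifold is strongly decomposably positive of type II if and only if at each point x, with respect to a unitary frame, the curvature matrix has the form R^E_x = −B∧B̄ᵀ + A∧Āᵀ where the E-valued vectors 𝒜_{αp} = Σ_i A_{ipα} e_i and ℬ_{αp} = Σ_i B_{ipᾱ} e_i span orthogonal subspaces of E_x (span{𝒜} ⊥ span{ℬ}), and the coefficient matrices satisfy rank(𝐁) = r₁·n and rank(𝐀) = (r−r₁)·n where r₁ = dim span{ℬ}. -/

import Mathlib

open Finset

/-- Pointwise model of the Chern curvature of a rank-`r` Hermitian bundle over an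
`n`-dimensional complex manifold, in a unitary frame: `R i j α β` is the coefficient
`R_{i j̄ α β̄}`. -/
abbrev CurvTensor (n r : ℕ) : Type := Fin r → Fin r → Fin n → Fin n → ℂ

/-- Hermitian symmetry `R_{i j̄ α β̄} = conj (R_{j ī β ᾱ})`. -/
def IsHermitianCurv {n r : ℕ} (R : CurvTensor n r) : Prop :=
  ∀ i j α β, R i j α β = (starRingEnd ℂ) (R j i β α)

/-- The Nakano quadratic form `R_{i j̄ α β̄} u^{iα} conj (u^{jβ})`. -/
noncomputable def nakanoQ {n r : ℕ} (R : CurvTensor n r) (u : Fin r → Fin n → ℂ) : ℂ :=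
  ∑ i, ∑ j, ∑ α, ∑ β, R i j α β * u i α * (starRingEnd ℂ) (u j β)

/-- The dual Nakano quadratic form `R_{i j̄ α β̄} v^{j̄α} conj (v^{īβ})`. -/
noncomputable def dualNakanoQ {n r : ℕ} (R : CurvTensor n r) (v : Fin r → Fin n → ℂ) : ℂ :=
  ∑ i, ∑ j, ∑ α, ∑ β, R i j α β * v j α * (starRingEnd ℂ) (v i β)

/-- The dual Nakano quadratic form in the type-II convention:
`R_{i j̄ α β̄} v^{i β̄} conj (v^{j ᾱ})`. -/
noncomputable def dualNakanoQ' {n r : ℕ} (R : CurvTensor n r) (v : Fin r → Fin n → ℂ) : ℂ :=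
  ∑ i, ∑ j, ∑ α, ∑ β, R i j α β * v i β * (starRingEnd ℂ) (v j α)

/-- The cross curvature term `R_{i j̄ α β̄} u^{iα} conj (v'^{jβ})`. -/
noncomputable def crossQ {n r : ℕ} (R : CurvTensor n r) (u v' : Fin r → Fin n → ℂ) : ℂ :=
  ∑ i, ∑ j, ∑ α, ∑ β, R i j α β * u i α * (starRingEnd ℂ) (v' j β)

/-- The Griffiths quadratic form `⟨R(v,v̄)ξ,ξ⟩ = R_{i j̄ α β̄} ξ^i conj(ξ^j) v^α conj(v^β)`. -/
noncomputable def griffithsQ {n r : ℕ} (R : CurvTensor n r) (v : Fin n → ℂ)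
    (ξ : Fin r → ℂ) : ℂ :=
  ∑ i, ∑ j, ∑ α, ∑ β, R i j α β * ξ i * (starRingEnd ℂ) (ξ j) * v α * (starRingEnd ℂ) (v β)

/-- The curvature has the form `R = −B∧B̄ᵀ + A∧Āᵀ` in a unitary frame, written on
coefficients: `R_{i j̄ α β̄} = ∑_p A_{jpα} conj(A_{ipβ}) + ∑_p B_{jpβ̄} conj(B_{ipᾱ})`,
where `A` is an `r×N` matrix of `(1,0)`-forms (coefficients `A i p α`) and `B` is an
`r×N` matrix of `(0,1)`-forms (coefficients `B i p α` of `dz̄^α`). -/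
def HasDecomp {n r N : ℕ} (R : CurvTensor n r) (A B : Fin r → Fin N → Fin n → ℂ) : Prop :=
  ∀ i j α β, R i j α β =
    (∑ p, A j p α * (starRingEnd ℂ) (A i p β)) + (∑ p, B j p β * (starRingEnd ℂ) (B i p α))

/-- The `N × (r·n)` coefficient matrix `𝐁 = (B_{i p ᾱ})_{p, (i,α)}` of a matrix of forms. -/
def coeffMat {n r N : ℕ} (B : Fin r → Fin N → Fin n → ℂ) : Matrix (Fin N) (Fin r × Fin n) ℂ :=
  Matrix.of fun p q => B q.1 p q.2

/-- The span of the `(1,0)`-covectors `{A_{ip}}` appearing in `A`. -/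
noncomputable def covSpanA {n r N : ℕ} (A : Fin r → Fin N → Fin n → ℂ) : Submodule ℂ (Fin n → ℂ) :=
  Submodule.span ℂ {x | ∃ i p, x = fun α => A i p α}

/-- The span of the `(1,0)`-covectors `{conj B_{ip}}` obtained by conjugating the
`(0,1)`-forms appearing in `B`. -/
noncomputable def covSpanBbar {n r N : ℕ} (B : Fin r → Fin N → Fin n → ℂ) : Submodule ℂ (Fin n → ℂ) :=
  Submodule.span ℂ {x | ∃ i p, x = fun α => (starRingEnd ℂ) (B i p α)}

/-- Strongly decomposable curvature condition of type I at a point, with the sign of the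
quadratic forms prescribed by the predicate `P` (`0 < ·` : positive, `0 ≤ ·` : non-negative,
`· < 0` : negative, `· ≤ 0` : non-positive): there is a decomposition
`T_x^{1,0}X = U ⊕ V` such that the curvature is Nakano `P`-definite on `E⊗U`, dual Nakano
`P`-definite on `Ē⊗V`, and the cross curvature terms vanish. -/
def TypeIAt {n r : ℕ} (P : ℝ → Prop) (R : CurvTensor n r) : Prop :=
  ∃ U V : Submodule ℂ (Fin n → ℂ), IsCompl U V ∧
    (∀ u : Fin r → Fin n → ℂ, (∀ i, u i ∈ U) → u ≠ 0 →
      ∃ c : ℝ, P c ∧ nakanoQ R u = (c : ℂ)) ∧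
    (∀ u v' : Fin r → Fin n → ℂ, (∀ i, u i ∈ U) → (∀ j, v' j ∈ V) → crossQ R u v' = 0) ∧
    (∀ v : Fin r → Fin n → ℂ, (∀ j, v j ∈ V) → v ≠ 0 →
      ∃ c : ℝ, P c ∧ dualNakanoQ R v = (c : ℂ))

/-- Strongly decomposable curvature condition of type II at a point, with the sign of the
quadratic forms prescribed by the predicate `P`: there is an orthogonal decomposition
`E_x = E₁ ⊕ E₂` making the curvature block diagonal, with the curvature Nakano
`P`-definite on `E₁ ⊗ T^{1,0}` and dual Nakano `P`-definite on `E₂ ⊗ T^{0,1}`. -/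
def TypeIIAt {n r : ℕ} (P : ℝ → Prop) (R : CurvTensor n r) : Prop :=
  ∃ E1 E2 : Submodule ℂ (Fin r → ℂ), IsCompl E1 E2 ∧
    (∀ ξ ∈ E1, ∀ η ∈ E2, (∑ i, ξ i * (starRingEnd ℂ) (η i)) = 0) ∧
    (∀ ξ ∈ E1, ∀ η ∈ E2, ∀ α β,
      (∑ i, ∑ j, R i j α β * ξ i * (starRingEnd ℂ) (η j)) = 0 ∧
      (∑ i, ∑ j, R i j α β * η i * (starRingEnd ℂ) (ξ j)) = 0) ∧
    (∀ u : Fin r → Fin n → ℂ, (∀ α, (fun i => u i α) ∈ E1) → u ≠ 0 →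
      ∃ c : ℝ, P c ∧ nakanoQ R u = (c : ℂ)) ∧
    (∀ v : Fin r → Fin n → ℂ, (∀ β, (fun i => v i β) ∈ E2) → v ≠ 0 →
      ∃ c : ℝ, P c ∧ dualNakanoQ' R v = (c : ℂ))

/-- Decomposable non-negativity at a point (Finski): `(1/2π)⟨R(v,v̄)ξ,ξ⟩` is a finite sum
of squared moduli of sesquilinear forms `l_p` and linear forms `l'_p` in `(v,ξ)`. -/
def DecomposablyNonnegAt {n r : ℕ} (R : CurvTensor n r) : Prop :=
  ∃ (N : ℕ) (l l' : Fin N → Fin n → Fin r → ℂ),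
    ∀ (v : Fin n → ℂ) (ξ : Fin r → ℂ),
      (1 / (2 * (Real.pi : ℂ))) * griffithsQ R v ξ =
        (((∑ p, Complex.normSq (∑ α, ∑ i, l p α i * v α * (starRingEnd ℂ) (ξ i)))
          + ∑ p, Complex.normSq (∑ α, ∑ i, l' p α i * v α * ξ i) : ℝ) : ℂ)

/-- Decomposable positivity at a point: decomposable non-negativity together with the
non-vanishing of `⟨R(v,v̄)ξ,ξ⟩` for `v, ξ ≠ 0`. -/
def DecomposablyPosAt {n r : ℕ} (R : CurvTensor n r) : Prop :=
  DecomposablyNonnegAt R ∧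
    ∀ (v : Fin n → ℂ) (ξ : Fin r → ℂ), v ≠ 0 → ξ ≠ 0 → griffithsQ R v ξ ≠ 0

/-- The span inside `E_x ≅ ℂʳ` of the vectors `𝒜_{αp} = ∑_i A_{ipα} e_i`. -/
noncomputable def vecSpan {n r N : ℕ} (A : Fin r → Fin N → Fin n → ℂ) :
    Submodule ℂ (Fin r → ℂ) :=
  Submodule.span ℂ {x | ∃ α p, x = fun i => A i p α}

/- ===================== Auxiliary infrastructure ===================== -/

noncomputable section Aux

open Module

/-- flatten a doubly-indexed vector -/
def flat {n r : ℕ} (u : Fin r → Fin n → ℂ) : Fin r × Fin n → ℂ := fun q => u q.1 q.2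

def toEuc {r : ℕ} : (Fin r → ℂ) ≃ₗ[ℂ] EuclideanSpace ℂ (Fin r) :=
  (WithLp.linearEquiv 2 ℂ (Fin r → ℂ)).symm

/-- orthogonal complement of a subspace of `Fin r → ℂ` -/
def orth {r : ℕ} (S : Submodule ℂ (Fin r → ℂ)) : Submodule ℂ (Fin r → ℂ) :=
  ((S.map (toEuc (r := r) : (Fin r → ℂ) →ₗ[ℂ] EuclideanSpace ℂ (Fin r)))ᗮ).map ((toEuc (r := r)).symm : EuclideanSpace ℂ (Fin r) →ₗ[ℂ] (Fin r → ℂ))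

lemma map_toEuc_orth {r : ℕ} (S : Submodule ℂ (Fin r → ℂ)) :
    (orth S).map (toEuc (r := r) : (Fin r → ℂ) →ₗ[ℂ] EuclideanSpace ℂ (Fin r)) = (S.map (toEuc (r := r) : (Fin r → ℂ) →ₗ[ℂ] EuclideanSpace ℂ (Fin r)))ᗮ :=
  (Submodule.map_symm_eq_iff (toEuc (r := r))).mp rfl

lemma map_symm_map {r : ℕ} (S : Submodule ℂ (Fin r → ℂ)) :
    (S.map (toEuc (r := r) : (Fin r → ℂ) →ₗ[ℂ] EuclideanSpace ℂ (Fin r))).map ((toEuc (r := r)).symm : EuclideanSpace ℂ (Fin r) →ₗ[ℂ] (Fin r → ℂ)) = S :=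
  (Submodule.map_symm_eq_iff (toEuc (r := r))).mpr rfl

lemma mem_orth {r : ℕ} {S : Submodule ℂ (Fin r → ℂ)} {x : Fin r → ℂ} :
    x ∈ orth S ↔ ∀ y ∈ S, ∑ i, (starRingEnd ℂ) (y i) * x i = 0 := by
  rw [orth]
  rw [show x ∈ (((S.map (toEuc (r := r) : (Fin r → ℂ) →ₗ[ℂ] EuclideanSpace ℂ (Fin r)))ᗮ).map ((toEuc (r := r)).symm : EuclideanSpace ℂ (Fin r) →ₗ[ℂ] (Fin r → ℂ))) ↔
      (toEuc (r := r)) x ∈ (S.map (toEuc (r := r) : (Fin r → ℂ) →ₗ[ℂ] EuclideanSpace ℂ (Fin r)))ᗮ from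
    ⟨fun h => by rcases h with ⟨y, hy, rfl⟩; simpa using hy,
     fun h => ⟨toEuc x, h, by simp⟩⟩]
  rw [Submodule.mem_orthogonal]
  constructor
  · intro h y hy
    have := h (toEuc y) (Submodule.mem_map_of_mem hy)
    simpa [PiLp.inner_apply, RCLike.inner_apply, toEuc, mul_comm] using this
  · intro h u hu
    rcases Submodule.mem_map.mp hu with ⟨y, hy, rfl⟩
    simpa [PiLp.inner_apply, RCLike.inner_apply, toEuc, mul_comm] using h y hy

lemma isCompl_orth {r : ℕ} (S : Submodule ℂ (Fin r → ℂ)) : IsCompl S (orth S) := by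
  have h : IsCompl (S.map (toEuc (r := r) : (Fin r → ℂ) →ₗ[ℂ] EuclideanSpace ℂ (Fin r))) ((S.map (toEuc (r := r) : (Fin r → ℂ) →ₗ[ℂ] EuclideanSpace ℂ (Fin r)))ᗮ) :=
    Submodule.isCompl_orthogonal_of_hasOrthogonalProjection
  have h2 := (Submodule.orderIsoMapComap ((toEuc (r := r)).symm)).isCompl h
  simp only [Submodule.orderIsoMapComap_apply, map_symm_map] at h2
  exact h2

lemma finrank_orth {r : ℕ} (S : Submodule ℂ (Fin r → ℂ)) :
    finrank ℂ S + finrank ℂ (orth S) = r := by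
  have h1 : finrank ℂ S = finrank ℂ (S.map (toEuc (r := r) : (Fin r → ℂ) →ₗ[ℂ] EuclideanSpace ℂ (Fin r))) :=
    (LinearEquiv.finrank_map_eq _ _).symm
  have h2 : finrank ℂ (orth S) = finrank ℂ ((S.map (toEuc (r := r) : (Fin r → ℂ) →ₗ[ℂ] EuclideanSpace ℂ (Fin r)))ᗮ) := by
    rw [← map_toEuc_orth]
    exact (LinearEquiv.finrank_map_eq _ _).symm
  rw [h1, h2, Submodule.finrank_add_finrank_orthogonal]
  simp [finrank_euclideanSpace]

lemma orth_orth {r : ℕ} (S : Submodule ℂ (Fin r → ℂ)) : orth (orth S) = S := by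
  rw [orth, map_toEuc_orth, Submodule.orthogonal_orthogonal, map_symm_map]

/-- submodule of flat vectors all of whose columns lie in `S` -/
def colsF (n : ℕ) {r : ℕ} (S : Submodule ℂ (Fin r → ℂ)) : Submodule ℂ (Fin r × Fin n → ℂ) where
  carrier := {w | ∀ α, (fun i => w (i, α)) ∈ S}
  add_mem' := fun ha hb α => S.add_mem (ha α) (hb α)
  zero_mem' := fun _ => S.zero_mem
  smul_mem' := fun c _ hw α => S.smul_mem c (hw α)

lemma mem_colsF {n r : ℕ} {S : Submodule ℂ (Fin r → ℂ)} {w : Fin r × Fin n → ℂ} :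
    w ∈ colsF n S ↔ ∀ α, (fun i => w (i, α)) ∈ S := Iff.rfl

/-- `colsF n S` is equivalent to `Fin n → S`. -/
def colsFEquiv (n : ℕ) {r : ℕ} (S : Submodule ℂ (Fin r → ℂ)) :
    (colsF n S) ≃ₗ[ℂ] (Fin n → S) where
  toFun w := fun α => ⟨fun i => w.1 (i, α), w.2 α⟩
  invFun g := ⟨fun q => (g q.2).1 q.1, fun α => (g α).2⟩
  map_add' := fun _ _ => rfl
  map_smul' := fun _ _ => rfl
  left_inv := fun _ => rfl
  right_inv := fun _ => rfl

lemma finrank_colsF {n r : ℕ} (S : Submodule ℂ (Fin r → ℂ)) :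
    finrank ℂ (colsF n S) = finrank ℂ S * n := by
  rw [LinearEquiv.finrank_eq (colsFEquiv n S), Module.finrank_pi_fintype]
  simp [mul_comm]

/- ===================== rank helpers ===================== -/

open Matrix ComplexOrder in
lemma rank_map_star {m l : Type*} [Fintype l] [Fintype m]
    (A : Matrix m l ℂ) : (A.map (starRingEnd ℂ)).rank = A.rank := by
  have h : A.map (starRingEnd ℂ) = (Aᴴ)ᵀ := by
    ext p q; simp [Matrix.conjTranspose_apply, Matrix.map_apply]
  rw [h, Matrix.rank_transpose, Matrix.rank_conjTranspose]

open Matrix in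
lemma rank_submatrix_rows {m m' l : Type*} [Fintype l] [Fintype m] [Fintype m']
    (A : Matrix m l ℂ) (e : m' ≃ m) : (A.submatrix e _root_.id).rank = A.rank := by
  have h : (A.submatrix e _root_.id).mulVecLin =
      (LinearEquiv.funCongrLeft ℂ ℂ e).toLinearMap ∘ₗ A.mulVecLin := by
    ext x p
    simp [Matrix.mulVecLin, Matrix.mulVec, Matrix.submatrix, LinearEquiv.funCongrLeft,
      LinearMap.funLeft, dotProduct]
  rw [Matrix.rank, Matrix.rank, h, LinearMap.range_comp, LinearEquiv.finrank_map_eq]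

open Matrix in
/-- `x⋆ (Aᴴ M A) x = (Ax)⋆ M (Ax)` -/
lemma conj_quad {ι : Type*} [Fintype ι] (M A : Matrix ι ι ℂ) (x : ι → ℂ) :
    star x ⬝ᵥ (Aᴴ * M * A) *ᵥ x = star (A *ᵥ x) ⬝ᵥ M *ᵥ (A *ᵥ x) := by
  rw [← Matrix.mulVec_mulVec, ← Matrix.mulVec_mulVec, Matrix.dotProduct_mulVec,
    Matrix.vecMul_conjTranspose, star_star, Matrix.dotProduct_mulVec]

open Matrix in
lemma star_dot_self_quad {ι κ : Type*} [Fintype ι] [Fintype κ] (C : Matrix κ ι ℂ) (x : ι → ℂ) :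
    star x ⬝ᵥ (Cᴴ * C) *ᵥ x = star (C *ᵥ x) ⬝ᵥ (C *ᵥ x) := by
  rw [← Matrix.mulVec_mulVec, Matrix.dotProduct_mulVec, Matrix.vecMul_conjTranspose, star_star,
    Matrix.dotProduct_mulVec]

/- ===================== sum manipulation ===================== -/

section Sums
variable {M : Type*} [AddCommMonoid M] {a b c d e : Type*}
  [Fintype a] [Fintype b] [Fintype c] [Fintype d] [Fintype e]

lemma sum4_blockswap (g : a → b → c → d → M) :
    ∑ x, ∑ y, ∑ z, ∑ w, g x y z w = ∑ z, ∑ w, ∑ x, ∑ y, g x y z w := by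
  have e1 : ∑ q : a × b, ∑ q' : c × d, g q.1 q.2 q'.1 q'.2
      = ∑ x, ∑ y, ∑ z, ∑ w, g x y z w := by
    simp only [Fintype.sum_prod_type]
  have e2 : ∑ q' : c × d, ∑ q : a × b, g q.1 q.2 q'.1 q'.2
      = ∑ z, ∑ w, ∑ x, ∑ y, g x y z w := by
    simp only [Fintype.sum_prod_type]
  rw [← e1, Finset.sum_comm, e2]

lemma sum4_comm {r n : ℕ} (g : Fin r → Fin n → Fin r → Fin n → M) :
    ∑ j, ∑ β, ∑ i, ∑ α, g j β i α = ∑ i, ∑ j, ∑ α, ∑ β, g j β i α := by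
  rw [sum4_blockswap]
  exact Finset.sum_congr rfl fun i _ => Finset.sum_comm

lemma pull5 (f : a → b → c → d → e → M) :
    ∑ i, ∑ j, ∑ k, ∑ l, ∑ p, f i j k l p = ∑ p, ∑ i, ∑ j, ∑ k, ∑ l, f i j k l p := by
  calc ∑ i, ∑ j, ∑ k, ∑ l, ∑ p, f i j k l p
      = ∑ i, ∑ j, ∑ k, ∑ p, ∑ l, f i j k l p :=
        Finset.sum_congr rfl fun _ _ => Finset.sum_congr rfl fun _ _ =>
          Finset.sum_congr rfl fun _ _ => Finset.sum_comm
    _ = ∑ i, ∑ j, ∑ p, ∑ k, ∑ l, f i j k l p :=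
        Finset.sum_congr rfl fun _ _ => Finset.sum_congr rfl fun _ _ => Finset.sum_comm
    _ = ∑ i, ∑ p, ∑ j, ∑ k, ∑ l, f i j k l p :=
        Finset.sum_congr rfl fun _ _ => Finset.sum_comm
    _ = ∑ p, ∑ i, ∑ j, ∑ k, ∑ l, f i j k l p := Finset.sum_comm

lemma pull3 (f : a → b → c → M) :
    ∑ i, ∑ j, ∑ p, f i j p = ∑ p, ∑ i, ∑ j, f i j p := by
  calc ∑ i, ∑ j, ∑ p, f i j p = ∑ i, ∑ p, ∑ j, f i j p :=
        Finset.sum_congr rfl fun _ _ => Finset.sum_comm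
    _ = ∑ p, ∑ i, ∑ j, f i j p := Finset.sum_comm

end Sums

section Factor
variable {a b c d : Type*} [Fintype a] [Fintype b] [Fintype c] [Fintype d]

lemma sum4_factor2 (Q : a → c → ℂ) (P : b → d → ℂ) :
    ∑ i : a, ∑ j : b, ∑ k : c, ∑ l : d, Q i k * P j l
      = (∑ i, ∑ k, Q i k) * (∑ j, ∑ l, P j l) := by
  simp only [← Finset.mul_sum, ← Finset.sum_mul]

lemma sum4_factor3 (Q : a → d → ℂ) (P : b → c → ℂ) :
    ∑ i : a, ∑ j : b, ∑ k : c, ∑ l : d, Q i l * P j k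
      = (∑ i, ∑ l, Q i l) * (∑ j, ∑ k, P j k) := by
  simp only [← Finset.mul_sum, ← Finset.sum_mul]

end Factor
/- ===================== expansion lemmas ===================== -/

section Expand
variable {n r N : ℕ}

lemma expandA_nak (A : Fin r → Fin N → Fin n → ℂ) (u : Fin r → Fin n → ℂ) :
    ∑ i, ∑ j, ∑ α, ∑ β, (∑ p, A j p α * (starRingEnd ℂ) (A i p β)) * u i α * (starRingEnd ℂ) (u j β)
      = ∑ p, ∑ α, ∑ β, (∑ j, A j p α * (starRingEnd ℂ) (u j β)) * (∑ i, (starRingEnd ℂ) (A i p β) * u i α) := by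
  conv_lhs => simp only [Finset.sum_mul]
  rw [pull5]
  refine Finset.sum_congr rfl fun p _ => ?_
  rw [sum4_blockswap]
  refine Finset.sum_congr rfl fun α _ => Finset.sum_congr rfl fun β _ => ?_
  rw [Finset.sum_mul_sum]
  refine Finset.sum_comm.trans ?_
  exact Finset.sum_congr rfl fun j _ => Finset.sum_congr rfl fun i _ => by ring

lemma expandB_nak (B : Fin r → Fin N → Fin n → ℂ) (u : Fin r → Fin n → ℂ) :
    ∑ i, ∑ j, ∑ α, ∑ β, (∑ p, B j p β * (starRingEnd ℂ) (B i p α)) * u i α * (starRingEnd ℂ) (u j β)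
      = ∑ p, (∑ i, ∑ α, (starRingEnd ℂ) (B i p α) * u i α) * (starRingEnd ℂ) (∑ i, ∑ α, (starRingEnd ℂ) (B i p α) * u i α) := by
  conv_lhs => simp only [Finset.sum_mul]
  rw [pull5]
  refine Finset.sum_congr rfl fun p _ => ?_
  conv_rhs => rw [map_sum]
  conv_rhs => rw [show (fun j => (starRingEnd ℂ) (∑ α, (starRingEnd ℂ) (B j p α) * u j α)) = fun j => ∑ β, B j p β * (starRingEnd ℂ) (u j β) from funext fun j => by
    rw [map_sum]; exact Finset.sum_congr rfl fun β _ => by simp [map_mul]]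
  rw [← sum4_factor2 (Q := fun i α => (starRingEnd ℂ) (B i p α) * u i α) (P := fun j β => B j p β * (starRingEnd ℂ) (u j β))]
  exact Finset.sum_congr rfl fun i _ => Finset.sum_congr rfl fun j _ =>
    Finset.sum_congr rfl fun α _ => Finset.sum_congr rfl fun β _ => by ring

lemma expandA_dual (A : Fin r → Fin N → Fin n → ℂ) (v : Fin r → Fin n → ℂ) :
    ∑ i, ∑ j, ∑ α, ∑ β, (∑ p, A j p α * (starRingEnd ℂ) (A i p β)) * v i β * (starRingEnd ℂ) (v j α)
      = ∑ p, (∑ i, ∑ α, (starRingEnd ℂ) (A i p α) * v i α) * (starRingEnd ℂ) (∑ i, ∑ α, (starRingEnd ℂ) (A i p α) * v i α) := by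
  conv_lhs => simp only [Finset.sum_mul]
  rw [pull5]
  refine Finset.sum_congr rfl fun p _ => ?_
  conv_rhs => rw [map_sum]
  conv_rhs => rw [show (fun j => (starRingEnd ℂ) (∑ α, (starRingEnd ℂ) (A j p α) * v j α)) = fun j => ∑ α, A j p α * (starRingEnd ℂ) (v j α) from funext fun j => by
    rw [map_sum]; exact Finset.sum_congr rfl fun α _ => by simp [map_mul]]
  rw [← sum4_factor3 (Q := fun i β => (starRingEnd ℂ) (A i p β) * v i β) (P := fun j α => A j p α * (starRingEnd ℂ) (v j α))]
  exact Finset.sum_congr rfl fun i _ => Finset.sum_congr rfl fun j _ =>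
    Finset.sum_congr rfl fun α _ => Finset.sum_congr rfl fun β _ => by ring

lemma expandB_dual (B : Fin r → Fin N → Fin n → ℂ) (v : Fin r → Fin n → ℂ) :
    ∑ i, ∑ j, ∑ α, ∑ β, (∑ p, B j p β * (starRingEnd ℂ) (B i p α)) * v i β * (starRingEnd ℂ) (v j α)
      = ∑ p, ∑ α, ∑ β, (∑ i, (starRingEnd ℂ) (B i p α) * v i β) * (∑ j, B j p β * (starRingEnd ℂ) (v j α)) := by
  conv_lhs => simp only [Finset.sum_mul]
  rw [pull5]
  refine Finset.sum_congr rfl fun p _ => ?_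
  rw [sum4_blockswap]
  refine Finset.sum_congr rfl fun α _ => Finset.sum_congr rfl fun β _ => ?_
  rw [Finset.sum_mul_sum]
  exact Finset.sum_congr rfl fun i _ => Finset.sum_congr rfl fun j _ => by ring

lemma expandBlock (A B : Fin r → Fin N → Fin n → ℂ) (ξ η : Fin r → ℂ) (α β : Fin n) :
    ∑ i, ∑ j, ((∑ p, A j p α * (starRingEnd ℂ) (A i p β)) + (∑ p, B j p β * (starRingEnd ℂ) (B i p α))) * ξ i * (starRingEnd ℂ) (η j)
      = (∑ p, (∑ j, A j p α * (starRingEnd ℂ) (η j)) * (∑ i, (starRingEnd ℂ) (A i p β) * ξ i))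
      + (∑ p, (∑ j, B j p β * (starRingEnd ℂ) (η j)) * (∑ i, (starRingEnd ℂ) (B i p α) * ξ i)) := by
  conv_lhs => simp only [add_mul, Finset.sum_add_distrib, Finset.sum_mul]
  congr 1
  · rw [pull3]
    refine Finset.sum_congr rfl fun p _ => ?_
    rw [Finset.sum_mul_sum]
    refine Finset.sum_comm.trans ?_
    exact Finset.sum_congr rfl fun j _ => Finset.sum_congr rfl fun i _ => by ring
  · rw [pull3]
    refine Finset.sum_congr rfl fun p _ => ?_
    rw [Finset.sum_mul_sum]
    refine Finset.sum_comm.trans ?_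
    exact Finset.sum_congr rfl fun j _ => Finset.sum_congr rfl fun i _ => by ring

/-- split `nakanoQ` along a decomposition of the curvature -/
lemma nakano_decomp_split {R : CurvTensor n r} {A B : Fin r → Fin N → Fin n → ℂ}
    (hDec : HasDecomp R A B) (u : Fin r → Fin n → ℂ) :
    nakanoQ R u = (∑ i, ∑ j, ∑ α, ∑ β, (∑ p, A j p α * (starRingEnd ℂ) (A i p β)) * u i α * (starRingEnd ℂ) (u j β))
      + (∑ i, ∑ j, ∑ α, ∑ β, (∑ p, B j p β * (starRingEnd ℂ) (B i p α)) * u i α * (starRingEnd ℂ) (u j β)) := by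
  have h : nakanoQ R u = ∑ i, ∑ j, ∑ α, ∑ β,
      (((∑ p, A j p α * (starRingEnd ℂ) (A i p β)) + (∑ p, B j p β * (starRingEnd ℂ) (B i p α))) * u i α * (starRingEnd ℂ) (u j β)) := by
    unfold nakanoQ
    exact Finset.sum_congr rfl fun i _ => Finset.sum_congr rfl fun j _ =>
      Finset.sum_congr rfl fun α _ => Finset.sum_congr rfl fun β _ => by rw [hDec i j α β]
  rw [h]
  simp only [add_mul, Finset.sum_add_distrib]

lemma dual_decomp_split {R : CurvTensor n r} {A B : Fin r → Fin N → Fin n → ℂ}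
    (hDec : HasDecomp R A B) (v : Fin r → Fin n → ℂ) :
    dualNakanoQ' R v = (∑ i, ∑ j, ∑ α, ∑ β, (∑ p, A j p α * (starRingEnd ℂ) (A i p β)) * v i β * (starRingEnd ℂ) (v j α))
      + (∑ i, ∑ j, ∑ α, ∑ β, (∑ p, B j p β * (starRingEnd ℂ) (B i p α)) * v i β * (starRingEnd ℂ) (v j α)) := by
  have h : dualNakanoQ' R v = ∑ i, ∑ j, ∑ α, ∑ β,
      (((∑ p, A j p α * (starRingEnd ℂ) (A i p β)) + (∑ p, B j p β * (starRingEnd ℂ) (B i p α))) * v i β * (starRingEnd ℂ) (v j α)) := by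
    unfold dualNakanoQ'
    exact Finset.sum_congr rfl fun i _ => Finset.sum_congr rfl fun j _ =>
      Finset.sum_congr rfl fun α _ => Finset.sum_congr rfl fun β _ => by rw [hDec i j α β]
  rw [h]
  simp only [add_mul, Finset.sum_add_distrib]

end Expand
/- ===================== the coefficient linear map ===================== -/

section Lmat
open Matrix Module
variable {n r N : ℕ}

/-- conjugated coefficient matrix -/
def Lmat (C : Fin r → Fin N → Fin n → ℂ) : Matrix (Fin N) (Fin r × Fin n) ℂ :=
  (coeffMat C).map (starRingEnd ℂ)

lemma Lmat_mulVec (C : Fin r → Fin N → Fin n → ℂ) (x : Fin r × Fin n → ℂ) (p : Fin N) :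
    (Lmat C *ᵥ x) p = ∑ i, ∑ α, (starRingEnd ℂ) (C i p α) * x (i, α) := by
  simp only [Lmat, coeffMat, Matrix.mulVec, dotProduct, Matrix.map_apply, Matrix.of_apply]
  rw [Fintype.sum_prod_type]

lemma Lmat_flat (C : Fin r → Fin N → Fin n → ℂ) (u : Fin r → Fin n → ℂ) (p : Fin N) :
    (Lmat C *ᵥ flat u) p = ∑ i, ∑ α, (starRingEnd ℂ) (C i p α) * u i α :=
  Lmat_mulVec C (flat u) p

lemma gen_mem_vecSpan (C : Fin r → Fin N → Fin n → ℂ) (p : Fin N) (α : Fin n) :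
    (fun i => C i p α) ∈ vecSpan C :=
  Submodule.subset_span ⟨α, p, rfl⟩

lemma colsF_orth_le_ker (C : Fin r → Fin N → Fin n → ℂ) :
    colsF n (orth (vecSpan C)) ≤ LinearMap.ker (Lmat C).mulVecLin := by
  intro x hx
  rw [LinearMap.mem_ker]
  funext p
  rw [Matrix.mulVecLin_apply, Lmat_mulVec, Finset.sum_comm]
  rw [show (0 : Fin N → ℂ) p = 0 from rfl]
  refine Finset.sum_eq_zero fun α _ => ?_
  exact mem_orth.mp (hx α) (fun i => C i p α) (gen_mem_vecSpan C p α)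

lemma rank_coeffMat_le (C : Fin r → Fin N → Fin n → ℂ) :
    (coeffMat C).rank ≤ finrank ℂ (vecSpan C) * n := by
  rw [← Matrix.rank_transpose, Matrix.rank, Matrix.range_mulVecLin, Matrix.col, Matrix.transpose_transpose]
  rw [← finrank_colsF (n := n) (vecSpan C)]
  refine Submodule.finrank_mono ?_
  rw [Submodule.span_le]
  rintro x ⟨p, rfl⟩
  intro α
  exact gen_mem_vecSpan C p α

lemma rank_add_finrank_ker (C : Fin r → Fin N → Fin n → ℂ) :
    (coeffMat C).rank + finrank ℂ (LinearMap.ker (Lmat C).mulVecLin) = r * n := by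
  have h := LinearMap.finrank_range_add_finrank_ker ((Lmat C).mulVecLin)
  rw [show finrank ℂ (LinearMap.range (Lmat C).mulVecLin) = (coeffMat C).rank from
    (rank_map_star (coeffMat C)).symm ▸ rfl] at h
  rwa [Module.finrank_pi, Fintype.card_prod, Fintype.card_fin, Fintype.card_fin] at h

lemma ker_Lmat_eq (C : Fin r → Fin N → Fin n → ℂ)
    (h : (coeffMat C).rank = finrank ℂ (vecSpan C) * n) :
    LinearMap.ker (Lmat C).mulVecLin = colsF n (orth (vecSpan C)) := by
  refine (Submodule.eq_of_le_of_finrank_le (colsF_orth_le_ker C) ?_).symm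
  rw [finrank_colsF]
  have e1 := rank_add_finrank_ker C
  have e2 := finrank_orth (vecSpan C)
  have e3 : r * n = finrank ℂ (vecSpan C) * n + finrank ℂ (orth (vecSpan C)) * n := by
    rw [← add_mul, e2]
  omega

end Lmat
/- ===================== backward direction ===================== -/

section Backward
open Matrix Module
variable {n r N : ℕ}

lemma typeII_of_decomp {R : CurvTensor n r} {A B : Fin r → Fin N → Fin n → ℂ}
    (hDec : HasDecomp R A B)
    (hOrth : ∀ x ∈ vecSpan A, ∀ y ∈ vecSpan B, (∑ i, x i * (starRingEnd ℂ) (y i)) = 0)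
    (hrkB : (coeffMat B).rank = (finrank ℂ (vecSpan B)) * n)
    (hrkA : (coeffMat A).rank = (r - finrank ℂ (vecSpan B)) * n) :
    TypeIIAt (fun c => 0 < c) R := by
  refine ⟨vecSpan B, orth (vecSpan B), isCompl_orth _, ?_, ?_, ?_, ?_⟩
  · -- orthogonality of the two factors
    intro ξ hξ η hη
    have h := mem_orth.mp hη ξ hξ
    calc ∑ i, ξ i * (starRingEnd ℂ) (η i)
        = (starRingEnd ℂ) (∑ i, (starRingEnd ℂ) (ξ i) * η i) := by
          rw [map_sum]; exact Finset.sum_congr rfl fun i _ => by simp [_root_.map_mul]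
      _ = 0 := by rw [h, map_zero]
  · -- block diagonality
    intro ξ hξ η hη α β
    have hAξ : ∀ (p : Fin N) (γ : Fin n), (∑ i, (starRingEnd ℂ) (A i p γ) * ξ i) = 0 := by
      intro p γ
      have h := hOrth _ (gen_mem_vecSpan A p γ) ξ hξ
      calc ∑ i, (starRingEnd ℂ) (A i p γ) * ξ i
          = (starRingEnd ℂ) (∑ i, A i p γ * (starRingEnd ℂ) (ξ i)) := by
            rw [map_sum]; exact Finset.sum_congr rfl fun i _ => by simp [_root_.map_mul]
        _ = 0 := by rw [h, map_zero]
    have hAξ' : ∀ (p : Fin N) (γ : Fin n), (∑ j, A j p γ * (starRingEnd ℂ) (ξ j)) = 0 :=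
      fun p γ => hOrth _ (gen_mem_vecSpan A p γ) ξ hξ
    have hBη : ∀ (p : Fin N) (γ : Fin n), (∑ i, (starRingEnd ℂ) (B i p γ) * η i) = 0 :=
      fun p γ => mem_orth.mp hη _ (gen_mem_vecSpan B p γ)
    have hBη' : ∀ (p : Fin N) (γ : Fin n), (∑ j, B j p γ * (starRingEnd ℂ) (η j)) = 0 := by
      intro p γ
      have h := hBη p γ
      calc ∑ j, B j p γ * (starRingEnd ℂ) (η j)
          = (starRingEnd ℂ) (∑ j, (starRingEnd ℂ) (B j p γ) * η j) := by
            rw [map_sum]; exact Finset.sum_congr rfl fun j _ => by simp [_root_.map_mul]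
        _ = 0 := by rw [h, map_zero]
    constructor
    · have h1 : ∑ i, ∑ j, R i j α β * ξ i * (starRingEnd ℂ) (η j)
          = ∑ i, ∑ j, ((∑ p, A j p α * (starRingEnd ℂ) (A i p β))
            + (∑ p, B j p β * (starRingEnd ℂ) (B i p α))) * ξ i * (starRingEnd ℂ) (η j) :=
        Finset.sum_congr rfl fun i _ => Finset.sum_congr rfl fun j _ => by rw [hDec i j α β]
      rw [h1, expandBlock]
      rw [Finset.sum_eq_zero fun p _ => by rw [hAξ p β, mul_zero],
        Finset.sum_eq_zero fun p _ => by rw [hBη' p β, zero_mul], add_zero]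
    · have h1 : ∑ i, ∑ j, R i j α β * η i * (starRingEnd ℂ) (ξ j)
          = ∑ i, ∑ j, ((∑ p, A j p α * (starRingEnd ℂ) (A i p β))
            + (∑ p, B j p β * (starRingEnd ℂ) (B i p α))) * η i * (starRingEnd ℂ) (ξ j) :=
        Finset.sum_congr rfl fun i _ => Finset.sum_congr rfl fun j _ => by rw [hDec i j α β]
      rw [h1, expandBlock]
      rw [Finset.sum_eq_zero fun p _ => by rw [hAξ' p α, zero_mul],
        Finset.sum_eq_zero fun p _ => by rw [hBη p α, mul_zero], add_zero]
  · -- Nakano positivity on E₁ ⊗ T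
    intro u hu hune
    have hA0 : ∀ (p : Fin N) (α β : Fin n), (∑ j, A j p α * (starRingEnd ℂ) (u j β)) = 0 :=
      fun p α β => hOrth _ (gen_mem_vecSpan A p α) _ (hu β)
    have hnak : nakanoQ R u = ∑ p, (∑ i, ∑ α, (starRingEnd ℂ) (B i p α) * u i α)
        * (starRingEnd ℂ) (∑ i, ∑ α, (starRingEnd ℂ) (B i p α) * u i α) := by
      rw [nakano_decomp_split hDec u, expandA_nak, expandB_nak]
      rw [Finset.sum_eq_zero fun p _ => Finset.sum_eq_zero fun α _ =>
        Finset.sum_eq_zero fun β _ => by rw [hA0 p α β, zero_mul], zero_add]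
    have htne : ∃ p : Fin N, (∑ i, ∑ α, (starRingEnd ℂ) (B i p α) * u i α) ≠ 0 := by
      by_contra hcon
      push_neg at hcon
      have hker : flat u ∈ LinearMap.ker (Lmat B).mulVecLin := by
        rw [LinearMap.mem_ker]
        funext p
        rw [Matrix.mulVecLin_apply, Lmat_flat]
        exact hcon p
      rw [ker_Lmat_eq B hrkB] at hker
      refine hune (funext fun i => funext fun α => ?_)
      have h0 : (fun i => u i α) = 0 :=
        Submodule.disjoint_def.mp (isCompl_orth (vecSpan B)).disjoint _ (hu α) (hker α)
      exact congrFun h0 i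
    obtain ⟨p0, hp0⟩ := htne
    refine ⟨∑ p, Complex.normSq (∑ i, ∑ α, (starRingEnd ℂ) (B i p α) * u i α), ?_, ?_⟩
    · exact Finset.sum_pos' (fun p _ => Complex.normSq_nonneg _)
        ⟨p0, Finset.mem_univ _, Complex.normSq_pos.mpr hp0⟩
    · rw [hnak]
      push_cast
      exact Finset.sum_congr rfl fun p _ => Complex.mul_conj _
  · -- dual Nakano positivity on E₂ ⊗ T̄
    intro v hv hvne
    rcases Nat.eq_zero_or_pos n with hn | hn
    · exact absurd (funext fun i => funext fun α => absurd α.2 (by omega)) hvne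
    have hTle : vecSpan A ≤ orth (vecSpan B) := by
      intro x hx
      refine mem_orth.mpr fun y hy => ?_
      have h := hOrth x hx y hy
      calc ∑ i, (starRingEnd ℂ) (y i) * x i
          = ∑ i, x i * (starRingEnd ℂ) (y i) := Finset.sum_congr rfl fun i _ => mul_comm _ _
        _ = 0 := h
    have hfO : finrank ℂ (orth (vecSpan B)) = r - finrank ℂ (vecSpan B) := by
      have := finrank_orth (vecSpan B); omega
    have hfT : finrank ℂ (vecSpan A) = r - finrank ℂ (vecSpan B) := by
      have h1 : finrank ℂ (vecSpan A) ≤ finrank ℂ (orth (vecSpan B)) :=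
        Submodule.finrank_mono hTle
      have h2 : (r - finrank ℂ (vecSpan B)) * n ≤ finrank ℂ (vecSpan A) * n :=
        hrkA ▸ rank_coeffMat_le A
      have h3 := Nat.le_of_mul_le_mul_right h2 hn
      omega
    have hTeq : vecSpan A = orth (vecSpan B) :=
      Submodule.eq_of_le_of_finrank_le hTle (by rw [hfT, hfO])
    have hkerA : LinearMap.ker (Lmat A).mulVecLin = colsF n (vecSpan B) := by
      rw [ker_Lmat_eq A (by rw [hfT]; exact hrkA), hTeq, orth_orth]
    have hB0 : ∀ (p : Fin N) (α β : Fin n), (∑ i, (starRingEnd ℂ) (B i p α) * v i β) = 0 :=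
      fun p α β => mem_orth.mp (hv β) _ (gen_mem_vecSpan B p α)
    have hdual : dualNakanoQ' R v = ∑ p, (∑ i, ∑ α, (starRingEnd ℂ) (A i p α) * v i α)
        * (starRingEnd ℂ) (∑ i, ∑ α, (starRingEnd ℂ) (A i p α) * v i α) := by
      rw [dual_decomp_split hDec v, expandA_dual, expandB_dual]
      rw [Finset.sum_eq_zero fun p _ => Finset.sum_eq_zero fun α _ =>
        Finset.sum_eq_zero fun β _ => by rw [hB0 p α β, zero_mul], add_zero]
    have hsne : ∃ p : Fin N, (∑ i, ∑ α, (starRingEnd ℂ) (A i p α) * v i α) ≠ 0 := by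
      by_contra hcon
      push_neg at hcon
      have hker : flat v ∈ LinearMap.ker (Lmat A).mulVecLin := by
        rw [LinearMap.mem_ker]
        funext p
        rw [Matrix.mulVecLin_apply, Lmat_flat]
        exact hcon p
      rw [hkerA] at hker
      refine hvne (funext fun i => funext fun α => ?_)
      have h0 : (fun i => v i α) = 0 :=
        Submodule.disjoint_def.mp (isCompl_orth (vecSpan B)).disjoint _ (hker α) (hv α)
      exact congrFun h0 i
    obtain ⟨p0, hp0⟩ := hsne
    refine ⟨∑ p, Complex.normSq (∑ i, ∑ α, (starRingEnd ℂ) (A i p α) * v i α), ?_, ?_⟩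
    · exact Finset.sum_pos' (fun p _ => Complex.normSq_nonneg _)
        ⟨p0, Finset.mem_univ _, Complex.normSq_pos.mpr hp0⟩
    · rw [hdual]
      push_cast
      exact Finset.sum_congr rfl fun p _ => Complex.mul_conj _

end Backward
/- ===================== forward direction ===================== -/

section Forward
open Matrix Module ComplexOrder

def ext1 {n r : ℕ} (M : Matrix (Fin r) (Fin r) ℂ) : Matrix (Fin r × Fin n) (Fin r × Fin n) ℂ :=
  Matrix.of fun q q' => M q.1 q'.1 * (if q.2 = q'.2 then 1 else 0)

lemma ext1_mulVec {n r : ℕ} (M : Matrix (Fin r) (Fin r) ℂ) (x : Fin r × Fin n → ℂ)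
    (i : Fin r) (α : Fin n) :
    (ext1 M *ᵥ x) (i, α) = (M *ᵥ fun i' => x (i', α)) i := by
  simp only [ext1, Matrix.mulVec, dotProduct, Matrix.of_apply]
  rw [Fintype.sum_prod_type]
  refine (Finset.sum_congr rfl fun i' _ => ?_).trans rfl
  rw [show ∑ α', M i i' * (if α = α' then 1 else 0) * x (i', α')
      = ∑ α', (if α = α' then M i i' * x (i', α') else 0) from
    Finset.sum_congr rfl fun α' _ => by by_cases h : α = α' <;> simp [h]]
  rw [Finset.sum_ite_eq]
  simp

lemma ext1_one {n r : ℕ} : (ext1 (1 : Matrix (Fin r) (Fin r) ℂ) : Matrix (Fin r × Fin n) (Fin r × Fin n) ℂ) = 1 := by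
  ext q q'
  rcases q with ⟨i, α⟩; rcases q' with ⟨i', α'⟩
  by_cases h1 : i = i' <;> by_cases h2 : α = α' <;>
    simp [ext1, Matrix.one_apply, Prod.ext_iff, h1, h2]

lemma ext1_sub {n r : ℕ} (M N : Matrix (Fin r) (Fin r) ℂ) :
    (ext1 (M - N) : Matrix (Fin r × Fin n) (Fin r × Fin n) ℂ) = ext1 M - ext1 N := by
  ext q q'
  by_cases h : q.2 = q'.2 <;> simp [ext1, sub_mul, h]

def Hmat {n r : ℕ} (R : CurvTensor n r) : Matrix (Fin r × Fin n) (Fin r × Fin n) ℂ :=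
  Matrix.of fun q q' => R q'.1 q.1 q'.2 q.2

def Hmat' {n r : ℕ} (R : CurvTensor n r) : Matrix (Fin r × Fin n) (Fin r × Fin n) ℂ :=
  Matrix.of fun q q' => R q'.1 q.1 q.2 q'.2

lemma quadNak {n r : ℕ} (R : CurvTensor n r) (u : Fin r → Fin n → ℂ) :
    star (flat u) ⬝ᵥ ((Hmat R) *ᵥ flat u) = nakanoQ R u := by
  simp only [nakanoQ, dotProduct, Matrix.mulVec, Hmat, flat, Matrix.of_apply,
    Pi.star_apply, Finset.mul_sum, RCLike.star_def]
  rw [Fintype.sum_prod_type]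
  simp only [Fintype.sum_prod_type]
  rw [sum4_comm (g := fun j β i α => (starRingEnd ℂ) (u j β) * (R i j α β * u i α))]
  exact Finset.sum_congr rfl fun i _ => Finset.sum_congr rfl fun j _ =>
    Finset.sum_congr rfl fun α _ => Finset.sum_congr rfl fun β _ => by ring

lemma quadDual {n r : ℕ} (R : CurvTensor n r) (u : Fin r → Fin n → ℂ) :
    star (flat u) ⬝ᵥ ((Hmat' R) *ᵥ flat u) = dualNakanoQ' R u := by
  simp only [dualNakanoQ', dotProduct, Matrix.mulVec, Hmat', flat, Matrix.of_apply,
    Pi.star_apply, Finset.mul_sum, RCLike.star_def]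
  rw [Fintype.sum_prod_type]
  simp only [Fintype.sum_prod_type]
  rw [sum4_comm (g := fun x y z w => (starRingEnd ℂ) (u x y) * (R z x y w * u z w))]
  refine Finset.sum_congr rfl fun i _ => Finset.sum_congr rfl fun j _ => ?_
  rw [Finset.sum_comm]
  exact Finset.sum_congr rfl fun α _ => Finset.sum_congr rfl fun β _ => by ring

lemma sandwich_entry {n r : ℕ} (R : CurvTensor n r) (K L : Matrix (Fin r) (Fin r) ℂ)
    (j i : Fin r) (α β : Fin n) :
    ((ext1 (n := n) K)ᴴ * Hmat R * ext1 (n := n) L) (j,β) (i,α)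
      = ∑ j', ∑ i', (starRingEnd ℂ) (K j' j) * R i' j' α β * L i' i := by
  have step1 : ((ext1 (n := n) K)ᴴ * Hmat R * ext1 (n := n) L) (j,β) (i,α)
      = ∑ b : Fin r × Fin n, (∑ a : Fin r × Fin n,
          (starRingEnd ℂ) ((ext1 K) a (j,β)) * Hmat R a b) * (ext1 L) b (i,α) := by
    simp only [Matrix.mul_apply, Matrix.conjTranspose_apply, RCLike.star_def, Finset.sum_mul]
  rw [step1]
  have step2 : ∀ b : Fin r × Fin n, (∑ a : Fin r × Fin n,
      (starRingEnd ℂ) ((ext1 K) a (j,β)) * Hmat R a b)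
      = ∑ j', (starRingEnd ℂ) (K j' j) * R b.1 j' b.2 β := by
    intro b
    rw [Fintype.sum_prod_type]
    refine (Finset.sum_congr rfl fun j' _ => ?_).trans rfl
    rw [show ∑ β' : Fin n, (starRingEnd ℂ) ((ext1 K) (j', β') (j, β)) * Hmat R (j', β') b
        = ∑ β' : Fin n, (if β' = β then (starRingEnd ℂ) (K j' j) * R b.1 j' b.2 β' else 0) from
      Finset.sum_congr rfl fun β' _ => by
        by_cases h : β' = β
        · subst h; simp [ext1, Hmat]
        · simp [ext1, Hmat, h]]
    rw [Finset.sum_ite_eq']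
    simp
  rw [Finset.sum_congr rfl fun b _ => by rw [step2 b]]
  rw [Fintype.sum_prod_type]
  have step3 : ∀ i' : Fin r, (∑ α' : Fin n,
      (∑ j', (starRingEnd ℂ) (K j' j) * R i' j' α' β) * (ext1 L) (i', α') (i, α))
      = (∑ j', (starRingEnd ℂ) (K j' j) * R i' j' α β) * L i' i := by
    intro i'
    rw [show ∑ α' : Fin n, (∑ j', (starRingEnd ℂ) (K j' j) * R i' j' α' β) * (ext1 L) (i', α') (i, α)
        = ∑ α' : Fin n, (if α' = α then (∑ j', (starRingEnd ℂ) (K j' j) * R i' j' α' β) * L i' i else 0) from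
      Finset.sum_congr rfl fun α' _ => by
        by_cases h : α' = α
        · subst h; simp [ext1]
        · simp [ext1, h]]
    rw [Finset.sum_ite_eq']
    simp
  rw [Finset.sum_congr rfl fun i' _ => step3 i']
  rw [Finset.sum_comm]
  exact Finset.sum_congr rfl fun j' _ => by rw [Finset.sum_mul]

lemma sandwich_entry' {n r : ℕ} (R : CurvTensor n r) (K L : Matrix (Fin r) (Fin r) ℂ)
    (j i : Fin r) (α β : Fin n) :
    ((ext1 (n := n) K)ᴴ * Hmat' R * ext1 (n := n) L) (j,α) (i,β)
      = ∑ j', ∑ i', (starRingEnd ℂ) (K j' j) * R i' j' α β * L i' i := by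
  have step1 : ((ext1 (n := n) K)ᴴ * Hmat' R * ext1 (n := n) L) (j,α) (i,β)
      = ∑ b : Fin r × Fin n, (∑ a : Fin r × Fin n,
          (starRingEnd ℂ) ((ext1 K) a (j,α)) * Hmat' R a b) * (ext1 L) b (i,β) := by
    simp only [Matrix.mul_apply, Matrix.conjTranspose_apply, RCLike.star_def, Finset.sum_mul]
  rw [step1]
  have step2 : ∀ b : Fin r × Fin n, (∑ a : Fin r × Fin n,
      (starRingEnd ℂ) ((ext1 K) a (j,α)) * Hmat' R a b)
      = ∑ j', (starRingEnd ℂ) (K j' j) * R b.1 j' α b.2 := by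
    intro b
    rw [Fintype.sum_prod_type]
    refine (Finset.sum_congr rfl fun j' _ => ?_).trans rfl
    rw [show ∑ α' : Fin n, (starRingEnd ℂ) ((ext1 K) (j', α') (j, α)) * Hmat' R (j', α') b
        = ∑ α' : Fin n, (if α' = α then (starRingEnd ℂ) (K j' j) * R b.1 j' α' b.2 else 0) from
      Finset.sum_congr rfl fun α' _ => by
        by_cases h : α' = α
        · subst h; simp [ext1, Hmat']
        · simp [ext1, Hmat', h]]
    rw [Finset.sum_ite_eq']
    simp
  rw [Finset.sum_congr rfl fun b _ => by rw [step2 b]]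
  rw [Fintype.sum_prod_type]
  have step3 : ∀ i' : Fin r, (∑ β' : Fin n,
      (∑ j', (starRingEnd ℂ) (K j' j) * R i' j' α β') * (ext1 L) (i', β') (i, β))
      = (∑ j', (starRingEnd ℂ) (K j' j) * R i' j' α β) * L i' i := by
    intro i'
    rw [show ∑ β' : Fin n, (∑ j', (starRingEnd ℂ) (K j' j) * R i' j' α β') * (ext1 L) (i', β') (i, β)
        = ∑ β' : Fin n, (if β' = β then (∑ j', (starRingEnd ℂ) (K j' j) * R i' j' α β') * L i' i else 0) from
      Finset.sum_congr rfl fun β' _ => by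
        by_cases h : β' = β
        · subst h; simp [ext1]
        · simp [ext1, h]]
    rw [Finset.sum_ite_eq']
    simp
  rw [Finset.sum_congr rfl fun i' _ => step3 i']
  rw [Finset.sum_comm]
  exact Finset.sum_congr rfl fun j' _ => by rw [Finset.sum_mul]

lemma decomp_of_typeII {n r : ℕ} (R : CurvTensor n r) (hH : IsHermitianCurv R)
    (h : TypeIIAt (fun c => 0 < c) R) :
    ∃ (N : ℕ) (A B : Fin r → Fin N → Fin n → ℂ),
        HasDecomp R A B ∧
        (∀ x ∈ vecSpan A, ∀ y ∈ vecSpan B, (∑ i, x i * (starRingEnd ℂ) (y i)) = 0) ∧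
        Matrix.rank (coeffMat B) = (Module.finrank ℂ (vecSpan B)) * n ∧
        Matrix.rank (coeffMat A) = (r - Module.finrank ℂ (vecSpan B)) * n := by
  classical
  rcases Nat.eq_zero_or_pos n with hn | hn
  · subst hn
    have h0 : ∀ (C : Fin r → Fin 0 → Fin 0 → ℂ), (coeffMat C).rank = 0 := fun C =>
      Nat.le_zero.mp (by simpa using Matrix.rank_le_card_width (coeffMat C))
    refine ⟨0, fun _ _ _ => 0, fun _ _ _ => 0, fun i j α β => α.elim0, ?_, ?_, ?_⟩
    · intro x hx y hy
      have hbot : vecSpan (fun (_ : Fin r) (_ : Fin 0) (_ : Fin 0) => (0:ℂ)) = ⊥ := by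
        rw [vecSpan, show {x : Fin r → ℂ | ∃ (α : Fin 0) (p : Fin 0),
            x = fun _ => (0:ℂ)} = ∅ from
          Set.eq_empty_iff_forall_notMem.mpr (by rintro x ⟨α, -, -⟩; exact α.elim0),
          Submodule.span_empty]
      rw [hbot] at hx
      rw [(Submodule.mem_bot ℂ).mp hx]
      simp
    · rw [Nat.mul_zero]; exact h0 _
    · rw [Nat.mul_zero]; exact h0 _
  obtain ⟨E1, E2, hCompl, hOrtho, hBlock, hNak, hDual⟩ := h
  -- identify E2 with the orthogonal complement of E1
  have hE2 : E2 = orth E1 := by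
    have hle : E2 ≤ orth E1 := by
      intro x hx
      refine mem_orth.mpr fun y hy => ?_
      have hxy := hOrtho y hy x hx
      calc ∑ i, (starRingEnd ℂ) (y i) * x i
          = (starRingEnd ℂ) (∑ i, y i * (starRingEnd ℂ) (x i)) := by
            rw [map_sum]; exact Finset.sum_congr rfl fun i _ => by simp [_root_.map_mul] <;> ring
        _ = 0 := by rw [hxy, map_zero]
    have hfr : finrank ℂ E1 + finrank ℂ E2 = r := by
      have hcard : finrank ℂ (Fin r → ℂ) = r := by
        rw [Module.finrank_pi, Fintype.card_fin]
      have hfr2 := Submodule.finrank_add_eq_of_isCompl hCompl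
      rw [hcard] at hfr2
      exact hfr2
    have h2 := finrank_orth E1
    exact Submodule.eq_of_le_of_finrank_le hle (by omega)
  -- the orthogonal projection onto E1, as an endomorphism of `Fin r → ℂ`
  set K : Submodule ℂ (EuclideanSpace ℂ (Fin r)) := E1.map (toEuc (r := r) : (Fin r → ℂ) →ₗ[ℂ] EuclideanSpace ℂ (Fin r)) with hK
  set p1 : (Fin r → ℂ) →ₗ[ℂ] (Fin r → ℂ) :=
    (toEuc (r := r)).symm.toLinearMap ∘ₗ
      ((K.subtype ∘ₗ (K.orthogonalProjectionOnto).toLinearMap) ∘ₗ (toEuc (r := r)).toLinearMap)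
    with hp1def
  have hp1app : ∀ x, p1 x = (toEuc (r := r)).symm
      ((K.orthogonalProjectionOnto (toEuc (r := r) x) : EuclideanSpace ℂ (Fin r))) := fun x => rfl
  have hp1mem : ∀ x, p1 x ∈ E1 := by
    intro x
    rw [hp1app]
    have hm := Submodule.mem_map_of_mem (f := ((toEuc (r := r)).symm : EuclideanSpace ℂ (Fin r) →ₗ[ℂ] (Fin r → ℂ)))
      (Submodule.coe_mem (K.orthogonalProjectionOnto (toEuc (r := r) x)))
    rwa [map_symm_map] at hm
  have hp1id : ∀ x ∈ E1, p1 x = x := by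
    intro x hx
    have hse := (Submodule.starProjection_eq_self_iff (K := K)).mpr (Submodule.mem_map_of_mem hx)
    rw [hp1app, show ((K.orthogonalProjectionOnto (toEuc (r := r) x) : EuclideanSpace ℂ (Fin r)))
      = toEuc (r := r) x from hse]
    exact LinearEquiv.symm_apply_apply _ _
  have hp1sub : ∀ x, x - p1 x ∈ orth E1 := by
    intro x
    have hmem : toEuc (r := r) x - (K.orthogonalProjectionOnto (toEuc (r := r) x) : EuclideanSpace ℂ (Fin r)) ∈ Kᗮ :=
      Submodule.sub_starProjection_mem_orthogonal (K := K) (toEuc (r := r) x)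
    have hxe : x - p1 x = (toEuc (r := r)).symm
        (toEuc (r := r) x - (K.orthogonalProjectionOnto (toEuc (r := r) x) : EuclideanSpace ℂ (Fin r))) := by
      rw [map_sub, LinearEquiv.symm_apply_apply, hp1app]
    rw [orth, hxe]
    exact Submodule.mem_map_of_mem hmem
  have hp1zero : ∀ x ∈ orth E1, p1 x = 0 := by
    intro x hx
    rcases hx with ⟨y, hy, rfl⟩
    have hyK : (y : EuclideanSpace ℂ (Fin r)) ∈ Kᗮ := hy
    rw [hp1app]
    have : toEuc (r := r) (((toEuc (r := r)).symm : EuclideanSpace ℂ (Fin r) →ₗ[ℂ] (Fin r → ℂ)) y) = y :=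
      LinearEquiv.apply_symm_apply _ _
    rw [this, Submodule.orthogonalProjectionOnto_apply_of_mem_orthogonal hyK]
    simp
  have hp1zero' : ∀ x, p1 x = 0 → x ∈ orth E1 := by
    intro x hx
    have := hp1sub x
    rwa [hx, sub_zero] at this
  -- matrices
  set Pm : Matrix (Fin r) (Fin r) ℂ := LinearMap.toMatrix' p1 with hPmdef
  have hPm : ∀ y, Pm *ᵥ y = p1 y := fun y => by
    rw [← Matrix.toLin'_apply, Matrix.toLin'_toMatrix']
  set Qm : Matrix (Fin r) (Fin r) ℂ := 1 - Pm with hQmdef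
  have hQm : ∀ y, Qm *ᵥ y = y - p1 y := fun y => by
    rw [hQmdef, Matrix.sub_mulVec, Matrix.one_mulVec, hPm]
  have hPcol : ∀ jj, (fun j' => Pm j' jj) ∈ E1 := by
    intro jj
    have hcol : (fun j' => Pm j' jj) = p1 (Pi.single jj 1) := by
      funext j'
      rw [← hPm]
      simp [Matrix.mulVec_single]
    rw [hcol]; exact hp1mem _
  have hQcol : ∀ jj, (fun j' => Qm j' jj) ∈ E2 := by
    intro jj
    rw [hE2]
    have hcol : (fun j' => Qm j' jj) = (Pi.single jj 1 : Fin r → ℂ) - p1 (Pi.single jj 1) := by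
      funext j'
      rw [← hQm]
      simp [Matrix.mulVec_single]
    rw [hcol]; exact hp1sub _
  set Pt : Matrix (Fin r × Fin n) (Fin r × Fin n) ℂ := ext1 (n := n) Pm with hPtdef
  set Qt : Matrix (Fin r × Fin n) (Fin r × Fin n) ℂ := ext1 (n := n) Qm with hQtdef
  have hPQ : Pt + Qt = 1 := by
    rw [hPtdef, hQtdef, hQmdef, ext1_sub, ext1_one]
    abel
  have hPt_col : ∀ (x : Fin r × Fin n → ℂ) (α : Fin n),
      (fun i => (Pt *ᵥ x) (i, α)) = p1 (fun i' => x (i', α)) := by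
    intro x α
    funext i
    rw [hPtdef, ext1_mulVec, hPm]
  have hQt_col : ∀ (x : Fin r × Fin n → ℂ) (α : Fin n),
      (fun i => (Qt *ᵥ x) (i, α)) = (fun i' => x (i', α)) - p1 (fun i' => x (i', α)) := by
    intro x α
    funext i
    rw [hQtdef, ext1_mulVec, hQm]
  have hPt_zero_iff : ∀ x, Pt *ᵥ x = 0 ↔ x ∈ colsF n (orth E1) := by
    intro x
    constructor
    · intro h0 α
      apply hp1zero'
      rw [← hPt_col x α, h0]
      rfl
    · intro hx
      funext q
      have : (Pt *ᵥ x) (q.1, q.2) = p1 (fun i' => x (i', q.2)) q.1 := congrFun (hPt_col x q.2) q.1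
      rw [show (Pt *ᵥ x) q = (Pt *ᵥ x) (q.1, q.2) from rfl, this, hp1zero _ (hx q.2)]
      rfl
  have hQt_zero_iff : ∀ x, Qt *ᵥ x = 0 ↔ x ∈ colsF n E1 := by
    intro x
    constructor
    · intro h0 α
      have hc := congrArg (fun f => f) (hQt_col x α)
      have hz : (fun i' => x (i', α)) - p1 (fun i' => x (i', α)) = 0 := by
        rw [← hQt_col x α, h0]
        rfl
      have : (fun i' => x (i', α)) = p1 (fun i' => x (i', α)) := by
        have := sub_eq_zero.mp hz; exact this
      rw [this]; exact hp1mem _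
    · intro hx
      funext q
      have h1 : (Qt *ᵥ x) (q.1, q.2) = ((fun i' => x (i', q.2)) - p1 (fun i' => x (i', q.2))) q.1 :=
        congrFun (hQt_col x q.2) q.1
      rw [show (Qt *ᵥ x) q = (Qt *ᵥ x) (q.1, q.2) from rfl, h1, hp1id _ (hx q.2)]
      simp
  -- Hermitian matrices
  have hHherm : (Hmat R)ᴴ = Hmat R := by
    ext q q'
    rw [Matrix.conjTranspose_apply]
    show star (R q.1 q'.1 q.2 q'.2) = R q'.1 q.1 q'.2 q.2
    rw [hH q'.1 q.1 q'.2 q.2]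
    rfl
  have hH'herm : (Hmat' R)ᴴ = Hmat' R := by
    ext q q'
    rw [Matrix.conjTranspose_apply]
    show star (R q.1 q'.1 q'.2 q.2) = R q'.1 q.1 q.2 q'.2
    rw [hH q'.1 q.1 q.2 q'.2]
    rfl
  set MB : Matrix (Fin r × Fin n) (Fin r × Fin n) ℂ := Ptᴴ * Hmat R * Pt with hMBdef
  set MA : Matrix (Fin r × Fin n) (Fin r × Fin n) ℂ := Qtᴴ * Hmat' R * Qt with hMAdef
  have hflat : ∀ (x : Fin r × Fin n → ℂ), flat (fun i α => x (i, α)) = x := by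
    intro x; funext q; rfl
  have hquadB : ∀ x, star x ⬝ᵥ MB *ᵥ x = nakanoQ R (fun i α => (Pt *ᵥ x) (i, α)) := by
    intro x
    rw [hMBdef, conj_quad, ← quadNak R (fun i α => (Pt *ᵥ x) (i, α)), hflat]
  have hquadA : ∀ x, star x ⬝ᵥ MA *ᵥ x = dualNakanoQ' R (fun i α => (Qt *ᵥ x) (i, α)) := by
    intro x
    rw [hMAdef, conj_quad, ← quadDual R (fun i α => (Qt *ᵥ x) (i, α)), hflat]
  have hnakge : ∀ (u : Fin r → Fin n → ℂ), (∀ α, (fun i => u i α) ∈ E1) → 0 ≤ nakanoQ R u := by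
    intro u hu
    by_cases h0 : u = 0
    · subst h0; simp [nakanoQ]
    · obtain ⟨c, hc, hceq⟩ := hNak u hu h0
      rw [hceq]
      exact Complex.zero_le_real.mpr hc.le
  have hdualge : ∀ (v : Fin r → Fin n → ℂ), (∀ α, (fun i => v i α) ∈ E2) → 0 ≤ dualNakanoQ' R v := by
    intro v hv
    by_cases h0 : v = 0
    · subst h0; simp [dualNakanoQ']
    · obtain ⟨c, hc, hceq⟩ := hDual v hv h0
      rw [hceq]
      exact Complex.zero_le_real.mpr hc.le
  have hMBpsd : MB.PosSemidef := by
    refine Matrix.posSemidef_iff_dotProduct_mulVec.mpr ?_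
    constructor
    · show MBᴴ = MB
      rw [hMBdef]
      simp only [Matrix.conjTranspose_mul, Matrix.conjTranspose_conjTranspose, hHherm]
      rw [Matrix.mul_assoc]
    · intro x
      rw [hquadB]
      exact hnakge _ (fun α => by rw [hPt_col]; exact hp1mem _)
  have hMApsd : MA.PosSemidef := by
    refine Matrix.posSemidef_iff_dotProduct_mulVec.mpr ?_
    constructor
    · show MAᴴ = MA
      rw [hMAdef]
      simp only [Matrix.conjTranspose_mul, Matrix.conjTranspose_conjTranspose, hH'herm]
      rw [Matrix.mul_assoc]
    · intro x
      rw [hquadA]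
      refine hdualge _ (fun α => ?_)
      rw [hQt_col, hE2]
      exact hp1sub _
  -- cross terms vanish
  have hcross1 : Ptᴴ * Hmat R * Qt = 0 := by
    ext q q'
    rcases q with ⟨j, β⟩; rcases q' with ⟨i, α⟩
    rw [hPtdef, hQtdef, sandwich_entry]
    rw [show (0 : Matrix (Fin r × Fin n) (Fin r × Fin n) ℂ) (j,β) (i,α) = 0 from rfl]
    have hb := (hBlock (fun j' => Pm j' j) (hPcol j) (fun i' => Qm i' i) (hQcol i) α β).2
    calc ∑ j', ∑ i', (starRingEnd ℂ) (Pm j' j) * R i' j' α β * Qm i' i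
        = ∑ i', ∑ j', R i' j' α β * Qm i' i * (starRingEnd ℂ) (Pm j' j) := by
          rw [Finset.sum_comm]
          exact Finset.sum_congr rfl fun i' _ => Finset.sum_congr rfl fun j' _ => by ring
      _ = 0 := hb
  have hcross2 : Qtᴴ * Hmat R * Pt = 0 := by
    ext q q'
    rcases q with ⟨j, β⟩; rcases q' with ⟨i, α⟩
    rw [hPtdef, hQtdef, sandwich_entry]
    rw [show (0 : Matrix (Fin r × Fin n) (Fin r × Fin n) ℂ) (j,β) (i,α) = 0 from rfl]
    have hb := (hBlock (fun i' => Pm i' i) (hPcol i) (fun j' => Qm j' j) (hQcol j) α β).1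
    calc ∑ j', ∑ i', (starRingEnd ℂ) (Qm j' j) * R i' j' α β * Pm i' i
        = ∑ i', ∑ j', R i' j' α β * Pm i' i * (starRingEnd ℂ) (Qm j' j) := by
          rw [Finset.sum_comm]
          exact Finset.sum_congr rfl fun i' _ => Finset.sum_congr rfl fun j' _ => by ring
      _ = 0 := hb
  have hsplit : Hmat R = MB + Qtᴴ * Hmat R * Qt := by
    calc Hmat R = (Pt + Qt)ᴴ * Hmat R * (Pt + Qt) := by rw [hPQ]; simp
      _ = MB + Qtᴴ * Hmat R * Qt := by
        rw [Matrix.conjTranspose_add, Matrix.add_mul, Matrix.add_mul, Matrix.mul_add,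
          Matrix.mul_add, hcross1, hcross2, hMBdef]
        rw [add_zero, zero_add]
  have hrearr : ∀ (i j : Fin r) (α β : Fin n),
      MA (j,α) (i,β) = (Qtᴴ * Hmat R * Qt) (j,β) (i,α) := by
    intro i j α β
    rw [hMAdef, hQtdef, sandwich_entry', sandwich_entry]
  -- square-root decompositions
  obtain ⟨CB, hCB⟩ : ∃ C : Matrix (Fin r × Fin n) (Fin r × Fin n) ℂ, MB = Cᴴ * C := by
    open scoped MatrixOrder in
    obtain ⟨C, hC⟩ := CStarAlgebra.nonneg_iff_eq_star_mul_self.mp hMBpsd.nonneg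
    exact ⟨C, hC⟩
  obtain ⟨CA, hCA⟩ : ∃ C : Matrix (Fin r × Fin n) (Fin r × Fin n) ℂ, MA = Cᴴ * C := by
    open scoped MatrixOrder in
    obtain ⟨C, hC⟩ := CStarAlgebra.nonneg_iff_eq_star_mul_self.mp hMApsd.nonneg
    exact ⟨C, hC⟩
  set e : Fin (r * n) ≃ (Fin r × Fin n) := finProdFinEquiv.symm with hedef
  set Bm : Fin r → Fin (r * n) → Fin n → ℂ := fun i p α => (starRingEnd ℂ) (CB (e p) (i, α))
    with hBmdef
  set Am : Fin r → Fin (r * n) → Fin n → ℂ := fun i p α => (starRingEnd ℂ) (CA (e p) (i, α))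
    with hAmdef
  -- kernels of CB, CA
  have hCBzero : ∀ x ∈ colsF n (orth E1), CB *ᵥ x = 0 := by
    intro x hx
    have h1 : Pt *ᵥ x = 0 := (hPt_zero_iff x).mpr hx
    have h2 : MB *ᵥ x = 0 := by
      rw [hMBdef, ← Matrix.mulVec_mulVec, ← Matrix.mulVec_mulVec, h1]
      simp
    have h3 : star (CB *ᵥ x) ⬝ᵥ (CB *ᵥ x) = 0 := by
      rw [← star_dot_self_quad, ← hCB, h2]
      simp
    exact dotProduct_star_self_eq_zero.mp h3
  have hCAzero : ∀ x ∈ colsF n E1, CA *ᵥ x = 0 := by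
    intro x hx
    have h1 : Qt *ᵥ x = 0 := (hQt_zero_iff x).mpr hx
    have h2 : MA *ᵥ x = 0 := by
      rw [hMAdef, ← Matrix.mulVec_mulVec, ← Matrix.mulVec_mulVec, h1]
      simp
    have h3 : star (CA *ᵥ x) ⬝ᵥ (CA *ᵥ x) = 0 := by
      rw [← star_dot_self_quad, ← hCA, h2]
      simp
    exact dotProduct_star_self_eq_zero.mp h3
  -- membership of the generating vectors
  have hcolembed : ∀ (y : Fin r → ℂ) (α : Fin n) (S : Submodule ℂ (Fin r → ℂ)), y ∈ S →
      (fun q : Fin r × Fin n => if q.2 = α then y q.1 else 0) ∈ colsF n S := by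
    intro y α S hy α'
    by_cases hα : α' = α
    · subst hα
      simpa using hy
    · rw [show (fun i => ((fun q : Fin r × Fin n => if q.2 = α then y q.1 else 0) (i, α')))
          = fun i => if α' = α then y i else 0 from rfl]
      simp only [hα, if_false]
      exact S.zero_mem
  have hmulembed : ∀ (C : Matrix (Fin r × Fin n) (Fin r × Fin n) ℂ) (y : Fin r → ℂ) (α : Fin n)
      (q0 : Fin r × Fin n),
      (C *ᵥ (fun q : Fin r × Fin n => if q.2 = α then y q.1 else 0)) q0
        = ∑ i, C q0 (i, α) * y i := by
    intro C y α q0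
    simp only [Matrix.mulVec, dotProduct]
    rw [Fintype.sum_prod_type]
    refine (Finset.sum_congr rfl fun i _ => ?_).trans rfl
    rw [show ∑ α' : Fin n, C q0 (i, α') * (if α' = α then y i else 0)
        = ∑ α' : Fin n, (if α' = α then C q0 (i, α') * y i else 0) from
      Finset.sum_congr rfl fun α' _ => by by_cases hα : α' = α <;> simp [hα]]
    rw [Finset.sum_ite_eq']
    simp
  have hBmem : ∀ p α, (fun i => Bm i p α) ∈ E1 := by
    intro p α
    rw [show E1 = orth (orth E1) from (orth_orth E1).symm]
    refine mem_orth.mpr fun y hy => ?_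
    have h0 : (CB *ᵥ (fun q : Fin r × Fin n => if q.2 = α then y q.1 else 0)) (e p) = 0 :=
      congrFun (hCBzero _ (hcolembed y α (orth E1) hy)) (e p)
    rw [hmulembed] at h0
    calc ∑ i, (starRingEnd ℂ) (y i) * Bm i p α
        = (starRingEnd ℂ) (∑ i, CB (e p) (i, α) * y i) := by
          rw [map_sum]
          exact Finset.sum_congr rfl fun i _ => by simp [hBmdef, _root_.map_mul]; ring
      _ = 0 := by rw [h0, map_zero]
  have hAmem : ∀ p α, (fun i => Am i p α) ∈ E2 := by
    intro p α
    rw [hE2]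
    refine mem_orth.mpr fun y hy => ?_
    have h0 : (CA *ᵥ (fun q : Fin r × Fin n => if q.2 = α then y q.1 else 0)) (e p) = 0 :=
      congrFun (hCAzero _ (hcolembed y α E1 hy)) (e p)
    rw [hmulembed] at h0
    calc ∑ i, (starRingEnd ℂ) (y i) * Am i p α
        = (starRingEnd ℂ) (∑ i, CA (e p) (i, α) * y i) := by
          rw [map_sum]
          exact Finset.sum_congr rfl fun i _ => by simp [hAmdef, _root_.map_mul]; ring
      _ = 0 := by rw [h0, map_zero]
  have hBle : vecSpan Bm ≤ E1 := by
    rw [vecSpan, Submodule.span_le]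
    rintro x ⟨α, p, rfl⟩
    exact hBmem p α
  have hAle : vecSpan Am ≤ E2 := by
    rw [vecSpan, Submodule.span_le]
    rintro x ⟨α, p, rfl⟩
    exact hAmem p α
  -- ranks
  have hcoeffB : coeffMat Bm = (CB.map (starRingEnd ℂ)).submatrix e _root_.id := by
    ext p q
    simp [coeffMat, hBmdef, Matrix.submatrix_apply, Matrix.map_apply]
  have hcoeffA : coeffMat Am = (CA.map (starRingEnd ℂ)).submatrix e _root_.id := by
    ext p q
    simp [coeffMat, hAmdef, Matrix.submatrix_apply, Matrix.map_apply]
  have hrkB1 : (coeffMat Bm).rank = MB.rank := by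
    rw [hcoeffB, rank_submatrix_rows, rank_map_star, hCB,
      Matrix.rank_conjTranspose_mul_self]
  have hrkA1 : (coeffMat Am).rank = MA.rank := by
    rw [hcoeffA, rank_submatrix_rows, rank_map_star, hCA,
      Matrix.rank_conjTranspose_mul_self]
  have hkerMB : LinearMap.ker MB.mulVecLin = colsF n (orth E1) := by
    ext x
    simp only [LinearMap.mem_ker, Matrix.mulVecLin_apply]
    constructor
    · intro h0
      have hq : nakanoQ R (fun i α => (Pt *ᵥ x) (i, α)) = 0 := by
        rw [← hquadB, h0]
        simp
      have hPt0 : Pt *ᵥ x = 0 := by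
        by_contra hne
        have hune : (fun i α => (Pt *ᵥ x) (i, α)) ≠ 0 := by
          intro hcon
          apply hne
          funext q
          have := congrFun (congrFun hcon q.1) q.2
          simpa using this
        obtain ⟨c, hc, hceq⟩ := hNak _ (fun α => by rw [hPt_col]; exact hp1mem _) hune
        rw [hceq] at hq
        exact hc.ne' (by exact_mod_cast hq)
      exact (hPt_zero_iff x).mp hPt0
    · intro hx
      have h1 : Pt *ᵥ x = 0 := (hPt_zero_iff x).mpr hx
      rw [hMBdef, ← Matrix.mulVec_mulVec, ← Matrix.mulVec_mulVec, h1]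
      simp
  have hkerMA : LinearMap.ker MA.mulVecLin = colsF n E1 := by
    ext x
    simp only [LinearMap.mem_ker, Matrix.mulVecLin_apply]
    constructor
    · intro h0
      have hq : dualNakanoQ' R (fun i α => (Qt *ᵥ x) (i, α)) = 0 := by
        rw [← hquadA, h0]
        simp
      have hQt0 : Qt *ᵥ x = 0 := by
        by_contra hne
        have hune : (fun i α => (Qt *ᵥ x) (i, α)) ≠ 0 := by
          intro hcon
          apply hne
          funext q
          have := congrFun (congrFun hcon q.1) q.2
          simpa using this
        obtain ⟨c, hc, hceq⟩ := hDual _ (fun α => by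
          rw [hQt_col, hE2]; exact hp1sub _) hune
        rw [hceq] at hq
        exact hc.ne' (by exact_mod_cast hq)
      exact (hQt_zero_iff x).mp hQt0
    · intro hx
      have h1 : Qt *ᵥ x = 0 := (hQt_zero_iff x).mpr hx
      rw [hMAdef, ← Matrix.mulVec_mulVec, ← Matrix.mulVec_mulVec, h1]
      simp
  have hfrorth := finrank_orth E1
  have hrkMB : MB.rank = finrank ℂ E1 * n := by
    have hrn := LinearMap.finrank_range_add_finrank_ker (MB.mulVecLin)
    rw [hkerMB, finrank_colsF, Module.finrank_pi, Fintype.card_prod, Fintype.card_fin,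
      Fintype.card_fin] at hrn
    have h3 : r * n = finrank ℂ E1 * n + finrank ℂ (orth E1) * n := by
      rw [← add_mul, hfrorth]
    have hrk : MB.rank = finrank ℂ (LinearMap.range MB.mulVecLin) := rfl
    omega
  have hrkMA : MA.rank = finrank ℂ (orth E1) * n := by
    have hrn := LinearMap.finrank_range_add_finrank_ker (MA.mulVecLin)
    rw [hkerMA, finrank_colsF, Module.finrank_pi, Fintype.card_prod, Fintype.card_fin,
      Fintype.card_fin] at hrn
    have h3 : r * n = finrank ℂ E1 * n + finrank ℂ (orth E1) * n := by
      rw [← add_mul, hfrorth]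
    have hrk : MA.rank = finrank ℂ (LinearMap.range MA.mulVecLin) := rfl
    omega
  have hfB : finrank ℂ (vecSpan Bm) = finrank ℂ E1 := by
    have h1 : finrank ℂ (vecSpan Bm) ≤ finrank ℂ E1 := Submodule.finrank_mono hBle
    have h2 : (coeffMat Bm).rank ≤ finrank ℂ (vecSpan Bm) * n := rank_coeffMat_le Bm
    rw [hrkB1, hrkMB] at h2
    have h4 := Nat.le_of_mul_le_mul_right h2 hn
    omega
  -- final assembly
  refine ⟨r * n, Am, Bm, ?_, ?_, ?_, ?_⟩
  · -- HasDecomp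
    intro i j α β
    have h1 : R i j α β = Hmat R (j,β) (i,α) := rfl
    have h2 : Hmat R (j,β) (i,α) = MB (j,β) (i,α) + (Qtᴴ * Hmat R * Qt) (j,β) (i,α) := by
      conv_lhs => rw [hsplit]
      rfl
    have h5 : MB (j,β) (i,α) = ∑ q : Fin r × Fin n, (starRingEnd ℂ) (CB q (j,β)) * CB q (i,α) := by
      rw [hCB]
      simp [Matrix.mul_apply, Matrix.conjTranspose_apply]
    have h4 : MA (j,α) (i,β) = ∑ q : Fin r × Fin n, (starRingEnd ℂ) (CA q (j,α)) * CA q (i,β) := by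
      rw [hCA]
      simp [Matrix.mul_apply, Matrix.conjTranspose_apply]
    have h6 : ∑ p, Am j p α * (starRingEnd ℂ) (Am i p β)
        = ∑ q : Fin r × Fin n, (starRingEnd ℂ) (CA q (j,α)) * CA q (i,β) := by
      rw [show (fun p => Am j p α * (starRingEnd ℂ) (Am i p β))
          = fun p => (starRingEnd ℂ) (CA (e p) (j,α)) * CA (e p) (i,β) from
        funext fun p => by simp [hAmdef]]
      exact Equiv.sum_comp e (fun q => (starRingEnd ℂ) (CA q (j,α)) * CA q (i,β))
    have h7 : ∑ p, Bm j p β * (starRingEnd ℂ) (Bm i p α)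
        = ∑ q : Fin r × Fin n, (starRingEnd ℂ) (CB q (j,β)) * CB q (i,α) := by
      rw [show (fun p => Bm j p β * (starRingEnd ℂ) (Bm i p α))
          = fun p => (starRingEnd ℂ) (CB (e p) (j,β)) * CB (e p) (i,α) from
        funext fun p => by simp [hBmdef]]
      exact Equiv.sum_comp e (fun q => (starRingEnd ℂ) (CB q (j,β)) * CB q (i,α))
    rw [h1, h2, h6, h7, ← h4, ← h5, hrearr i j α β]
    exact add_comm _ _
  · -- orthogonality of spans
    intro x hx y hy
    have hxy := hOrtho y (hBle hy) x (hAle hx)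
    calc ∑ i, x i * (starRingEnd ℂ) (y i)
        = (starRingEnd ℂ) (∑ i, y i * (starRingEnd ℂ) (x i)) := by
          rw [map_sum]
          exact Finset.sum_congr rfl fun i _ => by simp [_root_.map_mul] <;> ring
      _ = 0 := by rw [hxy, map_zero]
  · rw [hrkB1, hrkMB, hfB]
  · rw [hrkA1, hrkMA, hfB]
    congr 1
    omega

end Forward

/-- criterion for strong decomposable positivity of type II: the
curvature tensor (in a unitary frame at a point) is strongly decomposably positive of
type II iff `R = −B∧B̄ᵀ + A∧Āᵀ` where the `E`-valued vectors `𝒜_{αp} = ∑_i A_{ipα} e_i`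
and `ℬ_{αp} = ∑_i B_{ipᾱ} e_i` span orthogonal subspaces of `E_x`, and the coefficient
matrices satisfy `rank 𝐁 = r₁·n` and `rank 𝐀 = (r − r₁)·n` with `r₁ = dim span{ℬ}`. -/
theorem typeII_pos_criterion {n r : ℕ} (R : CurvTensor n r) (hH : IsHermitianCurv R) :
    TypeIIAt (fun c => 0 < c) R ↔
      ∃ (N : ℕ) (A B : Fin r → Fin N → Fin n → ℂ),
        HasDecomp R A B ∧
        (∀ x ∈ vecSpan A, ∀ y ∈ vecSpan B, (∑ i, x i * (starRingEnd ℂ) (y i)) = 0) ∧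
        Matrix.rank (coeffMat B) = (Module.finrank ℂ (vecSpan B)) * n ∧
        Matrix.rank (coeffMat A) = (r - Module.finrank ℂ (vecSpan B)) * n := by
  constructor
  · intro h
    exact decomp_of_typeII R hH h
  · rintro ⟨N, A, B, hDec, hOrth, hrkB, hrkA⟩
    exact typeII_of_decomp hDec hOrth hrkB hrkA
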